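/- Let G, H be finite abelian groups, A ⊆ G, B ⊆ H, and t: A → H any function. Define P_t = ∪_{a∈A} {a} × (t(a) + B) ⊆ G × H. If B does not tile H by translations, then P_t does not tile G × H by translations. -/
import Mathlib


/-- If `B` does not tile the finite abelian group `H` by translations, then for any
`A ⊆ G` and any `t : A → H`, the set `P_t = ⋃_{a ∈ A} {a} × (t a + B)` does not tile
`G × H` by translations. -/
theorem Pt_not_tile
    {G H : Type*} [AddCommGroup G] [AddCommGroup H] [Fintype G] [Fintype H]
    (A : Set G) (B : Set H) (t : A → H)
    (hB : ¬ ∃ M : Set H, ∀ x : H, ∃! m, m ∈ M ∧ x - m ∈ B) :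
    ¬ ∃ M : Set (G × H), ∀ z : G × H, ∃! m, m ∈ M ∧
        z - m ∈ ⋃ a : A, {(a : G)} ×ˢ ((t a + ·) '' B) := by
  rintro ⟨M, hM⟩
  obtain ⟨m₀, ⟨hm₀M, hmem₀⟩, -⟩ := hM (0, 0)
  rw [Set.mem_iUnion] at hmem₀
  obtain ⟨a₀, -⟩ := hmem₀
  apply hB
  refine ⟨{y : H | ∃ m ∈ M, ∃ h : (a₀ : G) - m.1 ∈ A, y = m.2 + t ⟨_, h⟩}, ?_⟩
  intro x
  obtain ⟨m, ⟨hmM, hmem⟩, huniq⟩ := hM ((a₀ : G), x)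
  rw [Set.mem_iUnion] at hmem
  obtain ⟨a, hmem⟩ := hmem
  simp only [Set.mem_prod, Set.mem_singleton_iff, Set.mem_image] at hmem
  obtain ⟨ha1, b, hbB, hb⟩ := hmem
  have ha1' : (a₀ : G) - m.1 = a := ha1
  have hA : (a₀ : G) - m.1 ∈ A := ha1' ▸ a.2
  refine ⟨m.2 + t ⟨_, hA⟩, ⟨⟨m, hmM, hA, rfl⟩, ?_⟩, ?_⟩
  · have h1 : t ⟨(a₀ : G) - m.1, hA⟩ = t a := by congr 1; exact Subtype.ext ha1'
    rw [h1]
    have hb' : t a + b = x - m.2 := hb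
    have h2 : x - (m.2 + t a) = b := by
      rw [show x - (m.2 + t a) = x - m.2 - t a by abel, ← hb']; abel
    rw [h2]; exact hbB
  · rintro y ⟨⟨n, hnM, hn, rfl⟩, hyB⟩
    have hmem' : ((a₀ : G), x) - n ∈ ⋃ a : A, {(a : G)} ×ˢ ((t a + ·) '' B) := by
      rw [Set.mem_iUnion]
      refine ⟨⟨_, hn⟩, ?_⟩
      simp only [Set.mem_prod, Set.mem_singleton_iff, Set.mem_image]
      refine ⟨rfl, x - (n.2 + t ⟨_, hn⟩), hyB, ?_⟩
      show t _ + (x - (n.2 + t _)) = x - n.2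
      abel
    have := huniq n ⟨hnM, hmem'⟩
    subst this
    rfl
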